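/- Let H be any n×n real matrix, g ∈ ℝⁿ, x ∈ ℝⁿ, μ > 0 and τ > 0, and define F_q(x;y) = g + H(y − x) − P_{[−μ,μ]}(g + H(y − x) − y/τ). Then for any y, z ∈ ℝⁿ there exists a diagonal matrix D = diag(d̄₁, …, d̄ₙ) with every d̄ᵢ ∈ [0,1] such that F_q(x;z) − F_q(x;y) = H(z − y) + D((1/τ)I − H)(z − y). -/

import Mathlib

open scoped RealInnerProductSpace

variable {n : ℕ}
local notation "E" => EuclideanSpace ℝ (Fin n)
local notation "CLM" => Matrix.toEuclideanCLM (𝕜 := ℝ)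

private lemma clamp_mvt (μ a b : ℝ) :
    ∃ d ∈ Set.Icc (0:ℝ) 1,
      max (-μ) (min μ a) - max (-μ) (min μ b) = d * (a - b) := by
  rcases eq_or_ne a b with h | h
  · exact ⟨0, ⟨le_refl _, zero_le_one⟩, by simp [h]⟩
  · set ca := max (-μ) (min μ a) with hca
    set cb := max (-μ) (min μ b) with hcb
    have lip : |ca - cb| ≤ |a - b| := by
      have h1 : |ca - cb| ≤ |min μ a - min μ b| := by
        rw [hca, hcb, max_comm (-μ) (min μ a), max_comm (-μ) (min μ b)]
        exact abs_max_sub_max_le_abs _ _ _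
      have h2 : |min μ a - min μ b| ≤ max |μ - μ| |a - b| :=
        abs_min_sub_min_le_max _ _ _ _
      simp only [sub_self, abs_zero, max_eq_right (abs_nonneg (a - b))] at h2
      exact h1.trans h2
    refine ⟨(ca - cb) / (a - b), ⟨?_, ?_⟩, ?_⟩
    · rcases lt_or_gt_of_ne h with hlt | hlt
      · have hc : ca ≤ cb := max_le_max le_rfl (min_le_min le_rfl hlt.le)
        have : (ca - cb) / (a - b) = (cb - ca) / (b - a) := by
          rw [← neg_sub cb ca, ← neg_sub b a, neg_div_neg_eq]
        rw [this]
        exact div_nonneg (by linarith) (by linarith)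
      · have hc : cb ≤ ca := max_le_max le_rfl (min_le_min le_rfl hlt.le)
        exact div_nonneg (by linarith) (by linarith)
    · rw [div_le_one_iff]
      rcases lt_or_gt_of_ne h with hlt | hlt
      · right; right
        have hc : ca ≤ cb := max_le_max le_rfl (min_le_min le_rfl hlt.le)
        have hl := abs_le.mp lip
        have habs : |a - b| = b - a := by
          rw [abs_of_neg (by linarith : a - b < 0)]; ring
        rw [habs] at hl
        exact ⟨by linarith, by linarith [hl.1]⟩
      · left
        have hc : cb ≤ ca := max_le_max le_rfl (min_le_min le_rfl hlt.le)
        have := abs_le.mp lip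
        rw [abs_of_pos (by linarith : (0:ℝ) < a - b)] at lip
        rw [abs_of_nonneg (by linarith : (0:ℝ) ≤ ca - cb)] at lip
        exact ⟨by linarith, lip⟩
    · exact (div_mul_cancel₀ _ (sub_ne_zero.mpr h)).symm
private lemma clamp_mvt' (μ a b : ℝ) :
    ∃ d ∈ Set.Icc (0:ℝ) 1,
      max (-μ) (min μ a) - max (-μ) (min μ b) = d * (a - b) := clamp_mvt μ a b

private lemma clm_apply (A : Matrix (Fin n) (Fin n) ℝ) (v : E) (i : Fin n) :
    CLM A v i = A.mulVec (fun j => v j) i := by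
  have := Matrix.ofLp_toEuclideanCLM (n := Fin n) (𝕜 := ℝ) A v
  have h2 := congrFun this i
  simpa using h2

/-- mean-value decomposition
`F_q(x;z) - F_q(x;y) = H(z-y) + D((1/τ)I - H)(z-y)` with `D` diagonal,
entries in `[0,1]`. -/
theorem stmt_9
    (H : Matrix (Fin n) (Fin n) ℝ)
    (gx x : E) (μ τ : ℝ) (hμ : 0 < μ) (hτ : 0 < τ)
    (Fq : E → E)
    (hFq : ∀ y i, Fq y i =
      gx i + CLM H (y - x) i -
        max (-μ) (min μ (gx i + CLM H (y - x) i - y i / τ)))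
    (y z : E) :
    ∃ d : Fin n → ℝ, (∀ i, d i ∈ Set.Icc (0 : ℝ) 1) ∧
      Fq z - Fq y =
        CLM H (z - y) +
          CLM (Matrix.diagonal d *
            ((1 / τ) • (1 : Matrix (Fin n) (Fin n) ℝ) - H)) (z - y) := by
  set a : Fin n → ℝ := fun i => gx i + CLM H (z - x) i - z i / τ with ha
  set b : Fin n → ℝ := fun i => gx i + CLM H (y - x) i - y i / τ with hb
  choose d hd hdd using fun i => clamp_mvt μ (a i) (b i)
  refine ⟨d, hd, ?_⟩
  ext i
  have hHd : CLM H (z - x) i - CLM H (y - x) i = CLM H (z - y) i := by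
    have h0 : CLM H (z - x) - CLM H (y - x) = CLM H (z - y) := by
      rw [← map_sub]; congr 1; abel
    have h1 := congrFun (congrArg (fun (w : E) (j : Fin n) => w j) h0) i
    simpa using h1
  have hab : a i - b i = CLM H (z - y) i - (z i - y i) / τ := by
    simp only [ha, hb]; rw [← hHd]; ring
  have hA : ∀ w : E, CLM ((1 / τ) • (1 : Matrix (Fin n) (Fin n) ℝ) - H) w i
      = w i / τ - CLM H w i := by
    intro w
    rw [clm_apply, clm_apply, Matrix.sub_mulVec, Matrix.smul_mulVec,
      Matrix.one_mulVec]
    simp [div_eq_inv_mul]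
  have hdiag : CLM (Matrix.diagonal d *
      ((1 / τ) • (1 : Matrix (Fin n) (Fin n) ℝ) - H)) (z - y) i
      = d i * ((z i - y i) / τ - CLM H (z - y) i) := by
    rw [map_mul]
    simp only [ContinuousLinearMap.mul_apply]
    rw [clm_apply, Matrix.mulVec_diagonal]
    congr 1
    have := hA (z - y)
    simpa using this
  have hsub : (Fq z - Fq y) i = Fq z i - Fq y i := by simp
  have hadd : (CLM H (z - y) + CLM (Matrix.diagonal d *
      ((1 / τ) • (1 : Matrix (Fin n) (Fin n) ℝ) - H)) (z - y)) i
      = CLM H (z - y) i + CLM (Matrix.diagonal d *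
      ((1 / τ) • (1 : Matrix (Fin n) (Fin n) ℝ) - H)) (z - y) i := by simp
  rw [hsub, hadd, hFq z i, hFq y i, hdiag]
  have h2 : max (-μ) (min μ (a i)) - max (-μ) (min μ (b i)) = d i * (a i - b i) :=
    hdd i
  have h3 : d i * ((z i - y i) / τ - CLM H (z - y) i) = -(d i * (a i - b i)) := by
    rw [hab]; ring
  simp only [ha, hb] at h2 h3
  linarith [h2, h3, hHd]
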